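/- (Projection step inequality) Let D ⊆ ℝᵖ be nonempty, closed and convex, let λ, λ_k ∈ D, let L > 0, and let v, ε ∈ ℝᵖ with ‖ε‖ ≤ B_out and ‖λ − λ_k‖ ≤ B_λ. Define λ_{k+1} = Π_D(λ_k + (1/L)(v + ε)). Then ⟨v, λ − λ_k⟩ ≤ (L/2)(‖λ_k − λ‖² − ‖λ_{k+1} − λ‖²) + B_out·B_λ + (1/(2L))‖v‖² + (1/L)⟨v, ε⟩ + (1/(2L))B_out². -/

import Mathlib

open RealInnerProductSpace

set_option maxHeartbeats 1000000 in
/-- projection step inequality.  The projection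
`λ_{k+1} = Π_D(λ_k + (1/L)(v + ε))` is expressed by its defining property:
membership in `D` together with minimality of the distance. -/
theorem projection_step_inequality
    (p : ℕ)
    (D : Set (EuclideanSpace ℝ (Fin p)))
    (hDne : D.Nonempty) (hDclosed : IsClosed D) (hDconvex : Convex ℝ D)
    (lam lamk : EuclideanSpace ℝ (Fin p))
    (hlam : lam ∈ D) (hlamk : lamk ∈ D)
    (L : ℝ) (hL : 0 < L)
    (v ε : EuclideanSpace ℝ (Fin p))
    (Bout Blam : ℝ)
    (hε : ‖ε‖ ≤ Bout)
    (hdiam : ‖lam - lamk‖ ≤ Blam)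
    (lamk1 : EuclideanSpace ℝ (Fin p))
    (hproj_mem : lamk1 ∈ D)
    (hproj_min : ∀ y ∈ D,
      dist (lamk + (1 / L) • (v + ε)) lamk1 ≤ dist (lamk + (1 / L) • (v + ε)) y) :
    ⟪v, lam - lamk⟫ ≤
      L / 2 * (‖lamk - lam‖ ^ 2 - ‖lamk1 - lam‖ ^ 2) + Bout * Blam +
        1 / (2 * L) * ‖v‖ ^ 2 + 1 / L * ⟪v, ε⟫ + 1 / (2 * L) * Bout ^ 2 := by
  set z := lamk + (1 / L) • (v + ε) with hz
  haveI : Nonempty D := ⟨⟨lamk1, hproj_mem⟩⟩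
  have hinf : ‖z - lamk1‖ = ⨅ w : D, ‖z - w‖ := by
    have hb : BddBelow (Set.range fun w : D => ‖z - ↑w‖) :=
      ⟨0, by rintro r ⟨w, rfl⟩; positivity⟩
    have lb : ∀ w : D, ‖z - lamk1‖ ≤ ‖z - ↑w‖ := fun w => by
      simpa [dist_eq_norm] using hproj_min w w.2
    have ub : (⨅ w : D, ‖z - ↑w‖) ≤ ‖z - lamk1‖ := ciInf_le hb (⟨lamk1, hproj_mem⟩ : D)
    exact le_antisymm (le_ciInf lb) ub
  have hVI : ⟪z - lamk1, lam - lamk1⟫ ≤ 0 :=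
    (norm_eq_iInf_iff_real_inner_le_zero hDconvex hproj_mem).mp hinf lam hlam
  -- rewrite the variational inequality
  have h1 : ⟪lamk - lamk1, lam - lamk1⟫ + (1 / L) * ⟪v + ε, lam - lamk1⟫ ≤ 0 := by
    have : z - lamk1 = (lamk - lamk1) + (1 / L) • (v + ε) := by
      rw [hz]; abel
    rw [this, inner_add_left, real_inner_smul_left] at hVI
    linarith
  have h1' : ⟪v + ε, lam - lamk1⟫ ≤ L * ⟪lamk1 - lamk, lam - lamk1⟫ := by
    have hs : ⟪lamk - lamk1, lam - lamk1⟫ = -⟪lamk1 - lamk, lam - lamk1⟫ := by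
      rw [← inner_neg_left]; congr 1; abel
    rw [hs] at h1
    have step : (1 / L) * ⟪v + ε, lam - lamk1⟫ ≤ ⟪lamk1 - lamk, lam - lamk1⟫ := by
      linarith
    calc ⟪v + ε, lam - lamk1⟫ = L * ((1 / L) * ⟪v + ε, lam - lamk1⟫) := by
            field_simp
      _ ≤ L * ⟪lamk1 - lamk, lam - lamk1⟫ := mul_le_mul_of_nonneg_left step hL.le
  -- three-point identity
  have h2 : 2 * ⟪lamk1 - lamk, lam - lamk1⟫ =
      ‖lamk - lam‖ ^ 2 - ‖lamk1 - lam‖ ^ 2 - ‖lamk1 - lamk‖ ^ 2 := by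
    have e1 : ‖lamk - lam‖ ^ 2 = ⟪lamk - lam, lamk - lam⟫ :=
      (real_inner_self_eq_norm_sq _).symm
    have e2 : ‖lamk1 - lam‖ ^ 2 = ⟪lamk1 - lam, lamk1 - lam⟫ :=
      (real_inner_self_eq_norm_sq _).symm
    have e3 : ‖lamk1 - lamk‖ ^ 2 = ⟪lamk1 - lamk, lamk1 - lamk⟫ :=
      (real_inner_self_eq_norm_sq _).symm
    rw [e1, e2, e3]
    simp only [inner_sub_left, inner_sub_right]
    have c1 : ⟪lamk, lam⟫ = ⟪lam, lamk⟫ := real_inner_comm _ _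
    have c2 : ⟪lamk1, lam⟫ = ⟪lam, lamk1⟫ := real_inner_comm _ _
    have c3 : ⟪lamk1, lamk⟫ = ⟪lamk, lamk1⟫ := real_inner_comm _ _
    ring_nf
    linarith [c1, c2, c3]
  -- Young's inequality
  have h3 : ⟪v + ε, lamk1 - lamk⟫ ≤
      L / 2 * ‖lamk1 - lamk‖ ^ 2 + 1 / (2 * L) * ‖v + ε‖ ^ 2 := by
    have key : 0 ≤ ‖(1 / L) • (v + ε) - (lamk1 - lamk)‖ ^ 2 := sq_nonneg _
    have expand : ‖(1 / L) • (v + ε) - (lamk1 - lamk)‖ ^ 2 =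
        (1 / L) ^ 2 * ‖v + ε‖ ^ 2 - 2 * (1 / L) * ⟪v + ε, lamk1 - lamk⟫ +
          ‖lamk1 - lamk‖ ^ 2 := by
      rw [norm_sub_sq_real, real_inner_smul_left, norm_smul]
      have hn : ‖(1 / L : ℝ)‖ = 1 / L := by
        rw [Real.norm_eq_abs, abs_of_pos (by positivity)]
      rw [hn]; ring
    rw [expand] at key
    have hk : 0 ≤ L * ((1 / L) ^ 2 * ‖v + ε‖ ^ 2 -
        2 * (1 / L) * ⟪v + ε, lamk1 - lamk⟫ + ‖lamk1 - lamk‖ ^ 2) :=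
      mul_nonneg hL.le key
    have hk' : L * ((1 / L) ^ 2 * ‖v + ε‖ ^ 2 -
        2 * (1 / L) * ⟪v + ε, lamk1 - lamk⟫ + ‖lamk1 - lamk‖ ^ 2) =
        (1 / L) * ‖v + ε‖ ^ 2 - 2 * ⟪v + ε, lamk1 - lamk⟫ + L * ‖lamk1 - lamk‖ ^ 2 := by
      field_simp
    rw [hk'] at hk
    have e3 : 1 / (2 * L) * ‖v + ε‖ ^ 2 = ((1 / L) * ‖v + ε‖ ^ 2) / 2 := by ring
    linarith
  -- norm expansion of v + ε
  have h4 : ‖v + ε‖ ^ 2 = ‖v‖ ^ 2 + 2 * ⟪v, ε⟫ + ‖ε‖ ^ 2 := by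
    rw [← real_inner_self_eq_norm_sq, inner_add_left, inner_add_right, inner_add_right,
      real_inner_self_eq_norm_sq, real_inner_self_eq_norm_sq, real_inner_comm ε v]
    ring
  -- bound on the error cross term
  have h5 : -⟪ε, lam - lamk⟫ ≤ Bout * Blam := by
    have := abs_real_inner_le_norm ε (lam - lamk)
    have hb : ‖ε‖ * ‖lam - lamk‖ ≤ Bout * Blam :=
      mul_le_mul hε hdiam (norm_nonneg _) ((norm_nonneg _).trans hε)
    have habs : -⟪ε, lam - lamk⟫ ≤ |⟪ε, lam - lamk⟫| := neg_le_abs _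
    linarith
  have h6 : ‖ε‖ ^ 2 ≤ Bout ^ 2 := by nlinarith [norm_nonneg ε]
  -- linearity decomposition
  have hlin : ⟪v, lam - lamk⟫ =
      ⟪v + ε, lam - lamk1⟫ + ⟪v + ε, lamk1 - lamk⟫ - ⟪ε, lam - lamk⟫ := by
    have e : lam - lamk = (lam - lamk1) + (lamk1 - lamk) := by abel
    rw [e]
    simp only [inner_add_left, inner_add_right]
    ring
  have hpos : 0 < 1 / (2 * L) := by positivity
  have h2' : L * ⟪lamk1 - lamk, lam - lamk1⟫ =
      L / 2 * (‖lamk - lam‖ ^ 2 - ‖lamk1 - lam‖ ^ 2 - ‖lamk1 - lamk‖ ^ 2) := by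
    linear_combination (L / 2) * h2
  have h4' : 1 / (2 * L) * ‖v + ε‖ ^ 2 =
      1 / (2 * L) * ‖v‖ ^ 2 + 1 / L * ⟪v, ε⟫ + 1 / (2 * L) * ‖ε‖ ^ 2 := by
    rw [h4]; field_simp
  have h6' : 1 / (2 * L) * ‖ε‖ ^ 2 ≤ 1 / (2 * L) * Bout ^ 2 :=
    mul_le_mul_of_nonneg_left h6 hpos.le
  linarith [h1', h2', h3, h4', h5, h6', hlin]
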